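/- arXiv:1404.7189 — 4 statements merged into one kernel-verified Lean document; each statement's English description precedes it below -/
import Mathlib

section
/- Let $p\in(0,1)$, let $Z_1,\dots,Z_m$ be i.i.d. random variables with $Z_i = 1+G_i$ where $G_i$ is geometric with parameter $p$ (i.e. $\Pr[G_i=k]=(1-p)^k p$ for $k\ge 0$), and let $\kappa \ge 1/p$. Then $\Pr[Z_1+\cdots+Z_m \ge \kappa m] \le f(2-\kappa)^m$, where $f(x) = (2-x)^{2-x} p (1-p)^{1-x}(1-x)^{x-1}$. -/
open MeasureTheory ProbabilityTheory Real Set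

/-- The function `f` from the paper, with real exponents (`0 ^ 0 = 1` by `rpow` convention). -/
noncomputable def paperF (p x : ℝ) : ℝ :=
  (2 - x) ^ (2 - x) * p * (1 - p) ^ (1 - x) * (1 - x) ^ (x - 1)

theorem stmt_1 {Ω : Type*} [MeasureSpace Ω] [IsProbabilityMeasure (ℙ : Measure Ω)]
    (p : ℝ) (hp : p ∈ Set.Ioo (0 : ℝ) 1) (m : ℕ)
    (G : Fin m → Ω → ℕ) (hmeas : ∀ i, Measurable (G i))
    (hindep : iIndepFun G ℙ)
    (hdist : ∀ i k, ℙ {ω | G i ω = k} = ENNReal.ofReal ((1 - p) ^ k * p))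
    (κ : ℝ) (hκ : 1 / p ≤ κ) :
    ℙ {ω | κ * m ≤ ∑ i, (1 + (G i ω : ℝ))} ≤ ENNReal.ofReal (paperF p (2 - κ) ^ m) := by
  obtain ⟨hp0, hp1⟩ := hp
  have hp1' : (0:ℝ) < 1 - p := by linarith
  have hκ1 : 1 < κ := lt_of_lt_of_le (by rw [lt_div_iff₀ hp0]; nlinarith) hκ
  have hκ0 : (0:ℝ) < κ := by linarith
  have hκp : 1 ≤ κ * p := by rw [div_le_iff₀ hp0] at hκ; linarith
  set s : ℝ := (κ - 1) / (κ * (1 - p)) with hs_def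
  have hs0 : 0 < s := div_pos (by linarith) (by positivity)
  have hs1 : 1 ≤ s := by
    rw [hs_def, le_div_iff₀ (by positivity)]
    nlinarith
  set t : ℝ := Real.log s with ht_def
  have ht0 : 0 ≤ t := Real.log_nonneg hs1
  have hexp : Real.exp t = s := Real.exp_log hs0
  set r : ℝ := (1 - p) * s with hr_def
  have hr_eq : r = (κ - 1) / κ := by
    rw [hr_def, hs_def]; field_simp
  have hr0 : 0 ≤ r := by positivity
  have hr1 : r < 1 := by rw [hr_eq]; rw [div_lt_one hκ0]; linarith
  have h1r : 1 - r = κ⁻¹ := by rw [hr_eq]; field_simp; ring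
  set a : ℝ := s * p * κ with ha_def
  have ha0 : 0 ≤ a := by positivity
  -- the individual variables
  set X : Fin m → Ω → ℝ := fun i ω => 1 + (G i ω : ℝ) with hX_def
  have hXmeas : ∀ i, Measurable (X i) := fun i =>
    measurable_const.add ((measurable_from_nat (f := fun k : ℕ => (k:ℝ))).comp (hmeas i))
  have hXindep : iIndepFun X ℙ :=
    hindep.comp (fun _ k => 1 + (k : ℝ)) (fun _ => measurable_from_nat)
  have hfmeas : ∀ i, Measurable (fun ω => Real.exp (t * X i ω)) := fun i =>
    (((hXmeas i).const_mul t).exp)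
  -- lintegral computation
  have hL : ∀ i, ∫⁻ ω, ENNReal.ofReal (Real.exp (t * X i ω)) ∂ℙ = ENNReal.ofReal a := by
    intro i
    have hg : Measurable (fun k : ℕ => ENNReal.ofReal (Real.exp (t * (1 + (k:ℝ))))) :=
      measurable_from_nat
    calc ∫⁻ ω, ENNReal.ofReal (Real.exp (t * X i ω)) ∂ℙ
        = ∫⁻ k, ENNReal.ofReal (Real.exp (t * (1 + (k:ℝ)))) ∂(Measure.map (G i) ℙ) := by
          rw [lintegral_map hg (hmeas i)]
      _ = ∑' k : ℕ, ENNReal.ofReal (Real.exp (t * (1 + (k:ℝ)))) * (Measure.map (G i) ℙ) {k} :=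
          lintegral_countable' _
      _ = ∑' k : ℕ, ENNReal.ofReal (s * p) * ENNReal.ofReal r ^ k := by
          refine tsum_congr fun k => ?_
          rw [Measure.map_apply (hmeas i) (measurableSet_singleton k)]
          have : G i ⁻¹' {k} = {ω | G i ω = k} := by ext ω; simp
          rw [this, hdist i k, ← ENNReal.ofReal_pow hr0,
            ← ENNReal.ofReal_mul (by positivity : (0:ℝ) ≤ s * p),
            ← ENNReal.ofReal_mul (Real.exp_nonneg _)]
          congr 1
          have he : Real.exp (t * (1 + (k:ℝ))) = s * s ^ k := by
            rw [mul_add, mul_one, Real.exp_add, hexp, mul_comm t (k:ℝ), Real.exp_nat_mul, hexp]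
          have hcomm : ∀ u v w : ℝ, u * u ^ k * (v ^ k * w) = u * w * (v * u) ^ k :=
            fun u v w => by rw [mul_pow]; ring
          rw [he, hr_def]; exact hcomm s (1 - p) p
      _ = ENNReal.ofReal (s * p) * (1 - ENNReal.ofReal r)⁻¹ := by
          rw [ENNReal.tsum_mul_left, ENNReal.tsum_geometric]
      _ = ENNReal.ofReal a := by
          have h1 : (1 : ENNReal) - ENNReal.ofReal r = ENNReal.ofReal (1 - r) := by
            rw [ENNReal.ofReal_sub 1 hr0, ENNReal.ofReal_one]
          rw [h1, h1r, ENNReal.ofReal_inv_of_pos hκ0, inv_inv, ha_def,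
            ← ENNReal.ofReal_mul (by positivity)]
  -- integrability
  have hint : ∀ i, Integrable (fun ω => Real.exp (t * X i ω)) ℙ := by
    intro i
    refine ⟨(hfmeas i).aestronglyMeasurable, ?_⟩
    rw [hasFiniteIntegral_iff_ofReal (Filter.Eventually.of_forall fun ω => Real.exp_nonneg _),
      hL i]
    exact ENNReal.ofReal_lt_top
  -- mgf of each
  have hmgf : ∀ i, mgf (X i) ℙ t = a := by
    intro i
    rw [mgf, integral_eq_lintegral_of_nonneg_ae
      (Filter.Eventually.of_forall fun ω => Real.exp_nonneg _) (hfmeas i).aestronglyMeasurable,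
      hL i, ENNReal.toReal_ofReal ha0]
  -- Chernoff
  have hSum : (fun ω => ∑ i, X i ω) = ∑ i, X i := by
    funext ω; simp [Finset.sum_apply]
  have hintS : Integrable (fun ω => Real.exp (t * (∑ i, X i) ω)) ℙ :=
    hXindep.integrable_exp_mul_sum hXmeas (fun i _ => hint i)
  have hch := measure_ge_le_exp_mul_mgf (X := ∑ i, X i) (μ := ℙ) (κ * m) ht0 hintS
  rw [hXindep.mgf_sum hXmeas] at hch
  simp only [hmgf, Finset.prod_const, Finset.card_univ, Fintype.card_fin] at hch
  -- final algebra
  have hsk : (0:ℝ) < s ^ κ := Real.rpow_pos_of_pos hs0 κ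
  have hval : Real.exp (-t * (κ * m)) * a ^ m = paperF p (2 - κ) ^ m := by
    have h1 : Real.exp (-t * (κ * m)) = (Real.exp (-(t * κ))) ^ m := by
      rw [← Real.exp_nat_mul]; ring_nf
    rw [h1, ← mul_pow]
    congr 1
    have h2 : Real.exp (-(t * κ)) = (s ^ κ)⁻¹ := by
      rw [Real.exp_neg, Real.rpow_def_of_pos hs0, ← ht_def]
    rw [h2]
    have hpF : paperF p (2 - κ) = κ ^ κ * p * (1 - p) ^ (κ - 1) * (κ - 1) ^ (1 - κ) := by
      rw [paperF, show (2:ℝ) - (2 - κ) = κ by ring, show (1:ℝ) - (2 - κ) = κ - 1 by ring,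
        show (2 - κ) - 1 = 1 - κ by ring]
    rw [hpF]
    have hκ1' : (0:ℝ) < κ - 1 := by linarith
    have e1 : (κ - 1 : ℝ) ^ (1 - κ) = (κ - 1) / (κ - 1) ^ κ := by
      rw [show (1 - κ : ℝ) = 1 + (-κ) by ring, Real.rpow_add hκ1', Real.rpow_one,
        Real.rpow_neg hκ1'.le, div_eq_mul_inv]
    have e2 : (1 - p : ℝ) ^ (κ - 1) = (1 - p) ^ κ / (1 - p) := by
      rw [show (κ - 1 : ℝ) = κ + (-1) by ring, Real.rpow_add hp1', Real.rpow_neg_one,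
        div_eq_mul_inv]
    have e3 : s ^ κ = (κ - 1) ^ κ / (κ ^ κ * (1 - p) ^ κ) := by
      rw [hs_def, Real.div_rpow hκ1'.le (by positivity), Real.mul_rpow hκ0.le hp1'.le]
    have hκκ : (0:ℝ) < κ ^ κ := Real.rpow_pos_of_pos hκ0 κ
    have hpκ : (0:ℝ) < (1 - p) ^ κ := Real.rpow_pos_of_pos hp1' κ
    have hκ1κ : (0:ℝ) < (κ - 1) ^ κ := Real.rpow_pos_of_pos hκ1' κ
    rw [e1, e2, e3, ha_def, hs_def]
    field_simp
  rw [hval] at hch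
  have hF0 : 0 ≤ paperF p (2 - κ) ^ m := by
    rw [← hval]; positivity
  rw [ENNReal.le_ofReal_iff_toReal_le (measure_ne_top _ _) hF0]
  have hset : {ω : Ω | κ * m ≤ ∑ i, (1 + (G i ω : ℝ))} = {ω : Ω | κ * m ≤ (∑ i, X i) ω} := by
    ext ω
    simp only [Set.mem_setOf_eq, Finset.sum_apply]
    exact Iff.rfl
  rw [hset]
  exact hch
end

section
/- Fix $p\in(0,1)$. There exists a unique $s_0\in(0,1)$ satisfying $(1-p)(2-s_0)=e^{1/s_0}(1-s_0)$. Moreover, if $p>1/2$ then $s_0>2-1/p$, and if $p_0<p\le 1/2$ then $s_0>\frac{1-2p}{1-p}$, where $p_0\in(0,1/2)$ is the unique solution of $\log((1-p)/p)=(1-p)/(1-2p)$. -/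
open Real Set

private lemma phi_deriv {x : ℝ} (hx : x ∈ Set.Ioo (0:ℝ) (1/2)) :
    HasDerivAt (fun x : ℝ => (1 - x) / (1 - 2 * x) - Real.log (1 - x) + Real.log x)
      (1 / (1 - 2*x)^2 + 1 / (1 - x) + 1 / x) x := by
  obtain ⟨hx0, hx2⟩ := hx
  have h2 : (1:ℝ) - 2*x > 0 := by linarith
  have h1 : (1:ℝ) - x > 0 := by linarith
  have d1 : HasDerivAt (fun x : ℝ => 1 - x) (-1) x := by
    simpa using (hasDerivAt_id x).const_sub 1
  have d2 : HasDerivAt (fun x : ℝ => 1 - 2*x) (-2) x := by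
    simpa using ((hasDerivAt_id x).const_mul (2:ℝ)).const_sub 1
  have ddiv := d1.div d2 (ne_of_gt h2)
  have dlog1 : HasDerivAt (fun x : ℝ => Real.log (1 - x)) ((1-x)⁻¹ * (-1)) x :=
    (Real.hasDerivAt_log (ne_of_gt h1)).comp x d1
  have dlogx : HasDerivAt Real.log x⁻¹ x := Real.hasDerivAt_log (ne_of_gt hx0)
  have := (ddiv.sub dlog1).add dlogx
  refine this.congr_deriv ?_
  rw [show (-1 * (1 - 2 * x) - (1 - x) * -2 : ℝ) = 1 by ring]
  ring

private lemma phi_mono : StrictMonoOn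
    (fun x : ℝ => (1 - x) / (1 - 2 * x) - Real.log (1 - x) + Real.log x)
    (Set.Ioo (0:ℝ) (1/2)) := by
  apply strictMonoOn_of_deriv_pos (convex_Ioo _ _)
  · intro x hx
    exact ((phi_deriv hx).continuousAt).continuousWithinAt
  · intro x hx
    rw [interior_Ioo] at hx
    rw [(phi_deriv hx).deriv]
    obtain ⟨hx0, hx2⟩ := hx
    have h2 : (1:ℝ) - 2*x > 0 := by linarith
    have h1 : (1:ℝ) - x > 0 := by linarith
    positivity

private lemma f_deriv (c : ℝ) {x : ℝ} (hx0 : x ≠ 0) :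
    HasDerivAt (fun s : ℝ => Real.exp (1/s) * (1 - s) - c * (2 - s))
      (Real.exp (1/x) * (-(x^2)⁻¹) * (1 - x) + Real.exp (1/x) * (-1) + c) x := by
  have dinv : HasDerivAt (fun s : ℝ => 1/s) (-(x^2)⁻¹) x := by
    simpa [one_div] using hasDerivAt_inv hx0
  have dexp : HasDerivAt (fun s : ℝ => Real.exp (1/s)) (Real.exp (1/x) * (-(x^2)⁻¹)) x :=
    dinv.exp
  have d1 : HasDerivAt (fun s : ℝ => 1 - s) (-1) x := by
    simpa using (hasDerivAt_id x).const_sub 1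
  have d2 : HasDerivAt (fun s : ℝ => c * (2 - s)) (c * (-1)) x := by
    exact (by simpa using (hasDerivAt_id x).const_sub 2 : HasDerivAt (fun s : ℝ => 2 - s) (-1) x).const_mul c
  have := (dexp.mul d1).sub d2
  refine this.congr_deriv ?_
  ring

theorem stmt_8 (p p₀ : ℝ) (hp : p ∈ Set.Ioo (0 : ℝ) 1)
    (hp₀ : p₀ ∈ Set.Ioo (0 : ℝ) (1 / 2))
    (hp₀eq : Real.log ((1 - p₀) / p₀) = (1 - p₀) / (1 - 2 * p₀)) :
    ∃ s₀ ∈ Set.Ioo (0 : ℝ) 1,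
      (1 - p) * (2 - s₀) = Real.exp (1 / s₀) * (1 - s₀) ∧
      (∀ s ∈ Set.Ioo (0 : ℝ) 1,
        (1 - p) * (2 - s) = Real.exp (1 / s) * (1 - s) → s = s₀) ∧
      (1 / 2 < p → 2 - 1 / p < s₀) ∧
      (p₀ < p → p ≤ 1 / 2 → (1 - 2 * p) / (1 - p) < s₀) := by
  obtain ⟨hp0, hp1⟩ := hp
  set c : ℝ := 1 - p with hc
  have hc0 : 0 < c := by simp [hc]; linarith
  have hc1 : c < 1 := by simp [hc]; linarith
  set f : ℝ → ℝ := fun s => Real.exp (1/s) * (1 - s) - c * (2 - s) with hf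
  -- continuity of f on Ioc 0 1
  have hcont : ContinuousOn f (Set.Ioc (0:ℝ) 1) := by
    intro x hx
    exact (f_deriv c (ne_of_gt hx.1)).continuousAt.continuousWithinAt
  have hanti : StrictAntiOn f (Set.Ioc (0:ℝ) 1) := by
    apply strictAntiOn_of_deriv_neg (convex_Ioc _ _) hcont
    intro x hx
    rw [interior_Ioc] at hx
    obtain ⟨hx0, hx1⟩ := hx
    rw [(f_deriv c (ne_of_gt hx0)).deriv]
    have he : 1 < Real.exp (1/x) := Real.one_lt_exp_iff.2 (by rw [one_div]; exact inv_pos.2 hx0)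
    have hx2 : (0:ℝ) < x^2 := by positivity
    have key : Real.exp (1/x) * ((x^2)⁻¹ * (1 - x) + 1) > 1 := by
      have h1 : (x^2)⁻¹ * (1 - x) + 1 ≥ 1 := by
        have : (x^2)⁻¹ * (1 - x) ≥ 0 := mul_nonneg (by positivity) (by linarith)
        linarith
      nlinarith
    nlinarith
  -- f (1/2) > 0, f 1 < 0
  have hf_half : 0 < f (1/2) := by
    have : Real.exp (1/(1/2):ℝ) = Real.exp 2 := by norm_num
    have h3 : (3:ℝ) < Real.exp 2 := by
      have := Real.add_one_lt_exp (x := 2) (by norm_num)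
      linarith
    simp only [hf]
    norm_num
    nlinarith
  have hf_one : f 1 < 0 := by
    simp only [hf]
    norm_num
    exact hc0
  -- IVT
  have hmem : (0:ℝ) ∈ Set.Icc (f 1) (f (1/2)) := ⟨le_of_lt hf_one, le_of_lt hf_half⟩
  obtain ⟨s₀, hs₀mem, hs₀eq⟩ := intermediate_value_Icc' (by norm_num : (1:ℝ)/2 ≤ 1)
    (hcont.mono (by intro x hx; exact ⟨by linarith [hx.1], hx.2⟩)) hmem
  have hs₀lt1 : s₀ < 1 := by
    rcases lt_or_eq_of_le hs₀mem.2 with h | h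
    · exact h
    · exfalso; rw [h] at hs₀eq; linarith
  have hs₀gt : 1/2 < s₀ := by
    rcases lt_or_eq_of_le hs₀mem.1 with h | h
    · exact h
    · exfalso; rw [← h] at hs₀eq; linarith
  have hs₀Ioo : s₀ ∈ Set.Ioo (0:ℝ) 1 := ⟨by linarith, hs₀lt1⟩
  have hs₀Ioc : s₀ ∈ Set.Ioc (0:ℝ) 1 := ⟨by linarith, le_of_lt hs₀lt1⟩
  -- key: a < s₀ when f a > 0
  have hkey : ∀ a ∈ Set.Ioc (0:ℝ) 1, 0 < f a → a < s₀ := by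
    intro a ha hfa
    by_contra h
    push_neg at h
    rcases lt_or_eq_of_le h with h' | h'
    · have := hanti hs₀Ioc ha h'
      rw [hs₀eq] at this
      linarith
    · rw [← h'] at hfa; rw [hs₀eq] at hfa; linarith
  refine ⟨s₀, hs₀Ioo, ?_, ?_, ?_, ?_⟩
  · -- the equation
    have : Real.exp (1/s₀) * (1 - s₀) - c * (2 - s₀) = 0 := hs₀eq
    rw [hc] at this
    linarith
  · -- uniqueness
    intro s hs heq
    have hsIoc : s ∈ Set.Ioc (0:ℝ) 1 := ⟨hs.1, le_of_lt hs.2⟩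
    have hfs : f s = 0 := by simp only [hf]; rw [hc] at heq ⊢; linarith
    exact hanti.injOn hsIoc hs₀Ioc (by rw [hfs, hs₀eq])
  · -- p > 1/2
    intro hp2
    set a : ℝ := 2 - 1/p with ha
    have hpinv : 1/p < 2 := by rw [div_lt_iff₀ hp0]; linarith
    have ha0 : 0 < a := by rw [ha]; linarith
    have ha1 : a ≤ 1 := by
      have h : 1 ≤ 1/p := by rw [le_div_iff₀ hp0]; linarith
      rw [ha]; linarith
    apply hkey a ⟨ha0, ha1⟩
    have h1a : 1 - a = (1-p)/p := by rw [ha]; field_simp; ring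
    have h2a : 2 - a = 1/p := by rw [ha]; ring
    have he : 1 < Real.exp (1/a) := Real.one_lt_exp_iff.2 (by rw [one_div]; exact inv_pos.2 ha0)
    have hq : 0 < (1-p)/p := by positivity
    simp only [hf]
    rw [h1a, h2a, hc]
    have : (1-p) * (1/p) = (1-p)/p := by ring
    rw [this]
    nlinarith
  · -- p₀ < p ≤ 1/2
    intro hpp₀ hp2
    rcases lt_or_eq_of_le hp2 with hplt | hpeq
    · set a : ℝ := (1 - 2*p)/(1 - p) with ha
      have h1p : (0:ℝ) < 1 - p := by linarith
      have h2p : (0:ℝ) < 1 - 2*p := by linarith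
      have ha0 : 0 < a := by positivity
      have ha1 : a ≤ 1 := by
        rw [ha, div_le_one h1p]; linarith
      apply hkey a ⟨ha0, ha1⟩
      -- φ p > 0
      obtain ⟨hq0, hq2⟩ := hp₀
      have hphi₀ : (1 - p₀) / (1 - 2 * p₀) - Real.log (1 - p₀) + Real.log p₀ = 0 := by
        rw [Real.log_div (by linarith) (by linarith)] at hp₀eq
        linarith
      have hphi := phi_mono ⟨hq0, hq2⟩ (⟨by linarith, by linarith⟩ : p ∈ Set.Ioo (0:ℝ) (1/2)) hpp₀
      simp only [] at hphi
      rw [hphi₀] at hphi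
      -- so log((1-p)/p) < (1-p)/(1-2p)
      have hlog : Real.log ((1-p)/p) < (1-p)/(1-2*p) := by
        rw [Real.log_div (by linarith) (by linarith)]
        linarith
      have hexp : (1-p)/p < Real.exp ((1-p)/(1-2*p)) :=
        (Real.log_lt_iff_lt_exp (by positivity)).1 hlog
      have h1a : 1 - a = p/(1-p) := by rw [eq_div_iff h1p.ne', ha, sub_mul, div_mul_cancel₀ _ h1p.ne']; ring
      have h2a : 2 - a = 1/(1-p) := by rw [eq_div_iff h1p.ne', ha, sub_mul, div_mul_cancel₀ _ h1p.ne']; ring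
      have hinva : 1/a = (1-p)/(1-2*p) := by rw [ha]; rw [one_div_div]
      simp only [hf]
      rw [h1a, h2a, hinva, hc]
      have hterm : (1-p) * (1/(1-p)) = 1 := by field_simp
      rw [hterm]
      have hE := Real.exp_pos ((1-p)/(1-2*p))
      have : Real.exp ((1-p)/(1-2*p)) * (p/(1-p)) > 1 := by
        rw [gt_iff_lt, ← div_lt_iff₀ (by positivity : (0:ℝ) < p/(1-p))]
        rw [one_div_div]
        exact hexp
      linarith
    · have h0 : (1 - 2*p)/c = 0 := by rw [hc, hpeq]; norm_num
      rw [hc] at h0 ⊢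
      rw [h0]
      exact hs₀Ioo.1
end

section
/- Let $\omega>0$ and let $\tau:[0,\omega]\to\mathbb{R}$ be a positive function differentiable on $(0,\omega)$ satisfying $\alpha(x)+\chi(\tau(x))=0$ for all $x\in[0,\omega]$, where $\alpha$ is convex and increasing and $\chi$ is convex and decreasing. Suppose there exists $x^*\in(0,\omega)$ with $\tau'(x^*)=\tau(x^*)/x^*$. Then $\frac{x^*}{\tau(x^*)}\ge\frac{y}{\tau(y)}$ for all $y\in[0,\omega]$. -/
open Set

theorem stmt_10 (ω : ℝ) (hω : 0 < ω) (τ α χ : ℝ → ℝ)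
    (hτpos : ∀ x ∈ Set.Icc 0 ω, 0 < τ x)
    (hτdiff : ∀ x ∈ Set.Ioo 0 ω, DifferentiableAt ℝ τ x)
    (hαconv : ConvexOn ℝ Set.univ α) (hαmono : Monotone α)
    (hχconv : ConvexOn ℝ Set.univ χ) (hχanti : StrictAnti χ)
    (heq : ∀ x ∈ Set.Icc 0 ω, α x + χ (τ x) = 0)
    (xs : ℝ) (hxs : xs ∈ Set.Ioo 0 ω) (hder : deriv τ xs = τ xs / xs) :
    ∀ y ∈ Set.Icc 0 ω, y / τ y ≤ xs / τ xs := by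
  obtain ⟨hxs0, hxsω⟩ := hxs
  have hxsI : xs ∈ Set.Icc 0 ω := ⟨hxs0.le, hxsω.le⟩
  -- τ is convex on Icc 0 ω
  have hτconv : ConvexOn ℝ (Set.Icc 0 ω) τ := by
    refine ⟨convex_Icc 0 ω, fun a ha b hb s t hs ht hst => ?_⟩
    have hc : s • a + t • b ∈ Set.Icc 0 ω := (convex_Icc 0 ω) ha hb hs ht hst
    have h1 : α (s • a + t • b) ≤ s • α a + t • α b :=
      hαconv.2 (mem_univ a) (mem_univ b) hs ht hst
    have h2 : χ (s • τ a + t • τ b) ≤ s • χ (τ a) + t • χ (τ b) :=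
      hχconv.2 (mem_univ (τ a)) (mem_univ (τ b)) hs ht hst
    have ea := heq a ha
    have eb := heq b hb
    have ec := heq _ hc
    have key : χ (s • τ a + t • τ b) ≤ χ (τ (s • a + t • b)) := by
      have : χ (τ (s • a + t • b)) = -α (s • a + t • b) := by linarith
      have hab : s • χ (τ a) + t • χ (τ b) = -(s • α a + t • α b) := by
        simp only [smul_eq_mul] at *
        nlinarith
      rw [this]
      calc χ (s • τ a + t • τ b) ≤ s • χ (τ a) + t • χ (τ b) := h2
        _ = -(s • α a + t • α b) := hab
        _ ≤ -α (s • a + t • b) := by linarith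
    exact (hχanti.le_iff_ge).mp key
  -- tangent line: τ y ≥ (τ xs / xs) * y
  have htang : ∀ y ∈ Set.Icc 0 ω, (τ xs / xs) * y ≤ τ y := by
    intro y hy
    have hτxs : 0 < τ xs := hτpos xs hxsI
    have hd : DifferentiableAt ℝ τ xs := hτdiff xs ⟨hxs0, hxsω⟩
    have hr : τ xs / xs * xs = τ xs := div_mul_cancel₀ _ (ne_of_gt hxs0)
    rcases lt_trichotomy y xs with h | h | h
    · have := hτconv.slope_le_deriv hy hxsI h hd
      rw [hder] at this
      rw [slope_def_field] at this
      rw [div_le_div_iff₀ (by linarith) hxs0] at this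
      nlinarith
    · subst h
      rw [div_mul_cancel₀ _ (ne_of_gt hxs0)]
    · have := hτconv.deriv_le_slope hxsI hy h hd
      rw [hder] at this
      rw [slope_def_field] at this
      rw [div_le_div_iff₀ hxs0 (by linarith)] at this
      nlinarith
  intro y hy
  have hτy : 0 < τ y := hτpos y hy
  have hτxs : 0 < τ xs := hτpos xs hxsI
  rw [div_le_div_iff₀ hτy hτxs]
  have := htang y hy
  have hy0 : 0 ≤ y := hy.1
  have hr : τ xs / xs * xs = τ xs := div_mul_cancel₀ _ (ne_of_gt hxs0)
  nlinarith [mul_le_mul_of_nonneg_left this hxs0.le, hr]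
end

section
/- Under the hypotheses of the previous lemma (positive $\tau$ on $[0,\omega]$ with $\alpha(x)+\chi(\tau(x))=0$, $\alpha$ convex increasing, $\chi$ convex strictly decreasing), the function $\tau$ is convex and increasing on $[0,\omega]$. -/
open Set

theorem stmt_11 (ω : ℝ) (hω : 0 < ω) (τ α χ : ℝ → ℝ)
    (hτpos : ∀ x ∈ Set.Icc 0 ω, 0 < τ x)
    (hαconv : ConvexOn ℝ Set.univ α) (hαmono : Monotone α)
    (hχconv : ConvexOn ℝ Set.univ χ) (hχanti : StrictAnti χ)
    (heq : ∀ x ∈ Set.Icc 0 ω, α x + χ (τ x) = 0) :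
    ConvexOn ℝ (Set.Icc 0 ω) τ ∧ MonotoneOn τ (Set.Icc 0 ω) := by
  have key : ∀ a b : ℝ, χ a ≤ χ b → b ≤ a := fun a b h => hχanti.le_iff_ge.mp h
  constructor
  · refine ⟨convex_Icc 0 ω, ?_⟩
    intro x hx y hy a b ha hb hab
    have hz : a • x + b • y ∈ Icc 0 ω := (convex_Icc 0 ω) hx hy ha hb hab
    have ez := heq _ hz
    have ex := heq x hx
    have ey := heq y hy
    have h2 : α (a • x + b • y) ≤ a * α x + b * α y :=
      hαconv.2 (mem_univ x) (mem_univ y) ha hb hab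
    have h3 : χ (a * τ x + b * τ y) ≤ a * χ (τ x) + b * χ (τ y) :=
      hχconv.2 (mem_univ _) (mem_univ _) ha hb hab
    have hcx : χ (τ x) = -α x := by linarith
    have hcy : χ (τ y) = -α y := by linarith
    rw [hcx, hcy] at h3
    have h4 : χ (a * τ x + b * τ y) ≤ χ (τ (a • x + b • y)) := by
      simp only [smul_eq_mul] at *
      linarith
    have := key _ _ h4
    simpa using this
  · intro x hx y hy hxy
    have h : χ (τ y) ≤ χ (τ x) := by
      have := hαmono hxy
      have ex := heq x hx; have ey := heq y hy
      linarith
    exact key _ _ h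
end
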